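/- Let T be a triangle with smallest interior angle γ_T and minimal width ω(T). Let E be an equilateral triangle of width ω(E) ≤ ω(T), positioned so that its height is aligned with the minimal-width height of T and its corresponding base lies on the longest side of T. Then the Hausdorff distance satisfies d_H(T, E) ≤ (√3 / tan γ_T)·ω(T) − ω(E). -/

import Mathlib

open Metric Set MeasureTheory Pointwise

/-- The minimal width of a planar set: the least length of its orthogonal
projection onto a direction. -/
noncomputable def minWidth (K : Set (EuclideanSpace ℝ (Fin 2))) : ℝ :=
  ⨅ θ : Metric.sphere (0 : EuclideanSpace ℝ (Fin 2)) 1,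
    (sSup ((fun x => (inner ℝ x θ.1 : ℝ)) '' K) - sInf ((fun x => (inner ℝ x θ.1 : ℝ)) '' K))

/-- The inradius: radius of a largest disk contained in the set. -/
noncomputable def inradius (K : Set (EuclideanSpace ℝ (Fin 2))) : ℝ :=
  sSup {r : ℝ | ∃ c, Metric.closedBall c r ⊆ K}

/-- The area of a planar set. -/
noncomputable def area (K : Set (EuclideanSpace ℝ (Fin 2))) : ℝ := (volume K).toReal

/-- A set is an equilateral triangle if it is the convex hull of three points at
equal positive pairwise distances. -/
def IsEquilateralTriangle (E : Set (EuclideanSpace ℝ (Fin 2))) : Prop :=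
  ∃ a b c : EuclideanSpace ℝ (Fin 2), dist a b = dist b c ∧ dist b c = dist c a ∧
    0 < dist a b ∧ E = convexHull ℝ {a, b, c}

/-- Hausdorff asymmetry from equilateral triangles of the same width. -/
noncomputable def hausdorffAsym (K : Set (EuclideanSpace ℝ (Fin 2))) : ℝ :=
  sInf {d : ℝ | ∃ E, IsEquilateralTriangle E ∧ minWidth E = minWidth K ∧
    d = Metric.hausdorffDist K E / minWidth E}

/-- Fraenkel asymmetry from equilateral triangles of the same width. -/
noncomputable def fraenkelAsym (K : Set (EuclideanSpace ℝ (Fin 2))) : ℝ :=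
  sInf {d : ℝ | ∃ E, IsEquilateralTriangle E ∧ minWidth E = minWidth K ∧
    d = area (symmDiff K E) / (minWidth E)^2}

/-- The point (x, y) of the Euclidean plane. -/
noncomputable def pt (x y : ℝ) : EuclideanSpace ℝ (Fin 2) :=
  (WithLp.equiv 2 (Fin 2 → ℝ)).symm ![x, y]

/-- The function φ of the paper. -/
noncomputable def phi (x : ℝ) : ℝ :=
  3 * x ^ 2 * (Real.pi / 3 - Real.arccos (x / (1 - x))) + 3 * x * Real.sqrt (1 - 2 * x)

/-- The function ψ of the paper. -/
noncomputable def psi (x y : ℝ) : ℝ :=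
  Real.pi * x ^ 2 + 2 * x * Real.sqrt (1 - 2 * x) - 2 * x ^ 2 * Real.arccos (x / (1 - x))
    + x * Real.sqrt (y ^ 2 - x ^ 2) - x ^ 2 * Real.arccos (x / y)

lemma pt_sub (a b c d : ℝ) : pt a b - pt c d = pt (a-c) (b-d) := by
  ext i; fin_cases i <;> simp [pt]

lemma pt_inner (a b c d : ℝ) : (inner ℝ (pt a b) (pt c d) : ℝ) = a*c + b*d := by
  simp [pt, PiLp.inner_apply, Fin.sum_univ_two]
  ring

lemma pt_norm (a b : ℝ) : ‖pt a b‖ = Real.sqrt (a^2 + b^2) := by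
  rw [EuclideanSpace.norm_eq]
  simp [pt, Fin.sum_univ_two, sq_abs]

lemma pt_dist (x y x' y' : ℝ) :
    dist (pt x y) (pt x' y') = Real.sqrt ((x - x')^2 + (y - y')^2) := by
  rw [EuclideanSpace.dist_eq]
  simp [pt, Fin.sum_univ_two, Real.dist_eq, sq_abs]

lemma infDist_convexHull_le {S t : Set (EuclideanSpace ℝ (Fin 2))} {r : ℝ}
    (ht : Convex ℝ t) (htne : t.Nonempty) (hr : 0 ≤ r)
    (hS : ∀ v ∈ S, Metric.infDist v t ≤ r) :
    ∀ x ∈ convexHull ℝ S, Metric.infDist x t ≤ r := by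
  intro x hx
  have hsub : convexHull ℝ S ⊆ Metric.cthickening r t := by
    apply convexHull_min _ (ht.cthickening r)
    intro v hv
    rw [Metric.mem_cthickening_iff]
    exact (ENNReal.le_ofReal_iff_toReal_le (Metric.infEdist_ne_top htne) hr).mpr (hS v hv)
  have hmem := hsub hx
  rw [Metric.mem_cthickening_iff] at hmem
  exact (ENNReal.le_ofReal_iff_toReal_le (Metric.infEdist_ne_top htne) hr).mp hmem

/-- Hausdorff distance from a triangle to a suitably placed equilateral triangle.
The triangle `T` has vertices `V₁ = (0,h)`, `V₂ = (−b,0)`, `V₃ = (c,0)` with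
`0 < b ≤ c` and the side `V₂V₃` longest (so its minimal width is `h` and its
smallest interior angle `γ_T` is at `V₃`); the equilateral triangle `E` of width
`ω ≤ h` has vertices `(0,ω)`, `(±ω/√3, 0)`, so that its height is aligned with
the minimal-width height of `T` and its base lies on the longest side of `T`. -/
theorem hausdorffDist_triangle_equilateral
    (b c h ω : ℝ) (hb : 0 < b) (hbc : b ≤ c) (hh : 0 < h)
    (hlongest : Real.sqrt (c ^ 2 + h ^ 2) ≤ b + c)
    (hω : 0 < ω) (hωh : ω ≤ h) :
    Metric.hausdorffDist
        (convexHull ℝ {pt 0 h, pt (-b) 0, pt c 0})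
        (convexHull ℝ {pt 0 ω, pt (-(ω / Real.sqrt 3)) 0, pt (ω / Real.sqrt 3) 0})
      ≤ Real.sqrt 3 / Real.tan (EuclideanGeometry.angle (pt 0 h) (pt c 0) (pt (-b) 0)) * h
        - ω := by
  have hc : 0 < c := lt_of_lt_of_le hb hbc
  set s := Real.sqrt 3 with hs_def
  have hs3 : s ^ 2 = 3 := Real.sq_sqrt (by norm_num)
  have hs0 : 0 < s := Real.sqrt_pos.2 (by norm_num)
  have hs_le : s ≤ 3 := by nlinarith
  -- the angle at (c,0) and the value of the RHS
  have hang : EuclideanGeometry.angle (pt 0 h) (pt c 0) (pt (-b) 0)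
      = Real.arccos (c / Real.sqrt (c^2 + h^2)) := by
    rw [EuclideanGeometry.angle, InnerProductGeometry.angle]
    have h1 : (pt 0 h) -ᵥ (pt c 0) = pt (-c) h := by
      rw [vsub_eq_sub, pt_sub]; norm_num
    have h2 : (pt (-b) 0) -ᵥ (pt c 0) = pt (-(b+c)) 0 := by
      rw [vsub_eq_sub, pt_sub]; ring_nf
    rw [h1, h2, pt_inner, pt_norm, pt_norm]
    congr 1
    have e1 : (-c)^2 + h^2 = c^2 + h^2 := by ring
    have e2 : (-(b+c))^2 + (0:ℝ)^2 = (b+c)^2 := by ring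
    rw [e1, e2, Real.sqrt_sq (by positivity : (0:ℝ) ≤ b + c)]
    rw [mul_comm (Real.sqrt _) (b+c)]
    have e3 : -c * -(b+c) + h * 0 = (b+c) * c := by ring
    rw [e3, mul_div_mul_left _ _ (by positivity : b + c ≠ 0)]
  have htan : Real.tan (Real.arccos (c / Real.sqrt (c^2 + h^2))) = h / c := by
    rw [Real.tan_arccos]
    have hq : (0:ℝ) < Real.sqrt (c^2+h^2) := Real.sqrt_pos.2 (by positivity)
    have hq2 : Real.sqrt (c^2+h^2) ^ 2 = c^2 + h^2 := Real.sq_sqrt (by positivity)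
    have e1 : 1 - (c / Real.sqrt (c^2+h^2))^2 = (h / Real.sqrt (c^2+h^2))^2 := by
      field_simp
      rw [hq2]; ring
    rw [e1, Real.sqrt_sq (by positivity : (0:ℝ) ≤ h / Real.sqrt (c^2+h^2))]
    rw [div_div_div_comm, div_self (ne_of_gt hq), div_one]
  have hRHS : s / Real.tan (EuclideanGeometry.angle (pt 0 h) (pt c 0) (pt (-b) 0)) * h - ω
      = s * c - ω := by
    rw [hang, htan]
    field_simp
  rw [hRHS]
  -- scalar inequalities
  have hh2 : h ^ 2 ≤ b ^ 2 + 2 * b * c := by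
    have hsq : Real.sqrt (c^2 + h^2) ^ 2 = c^2 + h^2 := Real.sq_sqrt (by positivity)
    nlinarith [pow_le_pow_left₀ (Real.sqrt_nonneg (c^2+h^2)) hlongest 2]
  have hhsc : h ≤ s * c := by
    have e : (s*c)^2 = 3*c^2 := by linear_combination c^2 * hs3
    have h3c : h^2 ≤ (s*c)^2 := by
      rw [e]
      nlinarith [mul_nonneg (sub_nonneg.2 hbc) (show (0:ℝ) ≤ 3*c+b by positivity)]
    calc h = Real.sqrt (h^2) := (Real.sqrt_sq hh.le).symm
      _ ≤ Real.sqrt ((s*c)^2) := Real.sqrt_le_sqrt h3c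
      _ = s*c := Real.sqrt_sq (by positivity)
  have hωsc : ω ≤ s * c := hωh.trans hhsc
  have hr0 : 0 ≤ s * c - ω := by linarith
  have hω2 : ω ^ 2 ≤ b ^ 2 + 2 * b * c := by nlinarith
  have hdiv : ω / s = ω * s / 3 := by
    rw [div_eq_div_iff (ne_of_gt hs0) (by norm_num : (3:ℝ) ≠ 0)]
    linear_combination (-ω) * hs3
  have key1 : c - ω * s / 3 ≤ s * c - ω := by
    nlinarith [mul_nonneg (sub_nonneg.2 hωsc) (sub_nonneg.2 hs_le)]
  have key2 : b - ω * s / 3 ≤ s * c - ω := by linarith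
  have key3 : ω * s / 3 - b ≤ s * c - ω := by
    have eL : (ω*(s+3))^2 = ω^2 * (12+6*s) := by linear_combination ω^2 * hs3
    have eR : (3*s*c+3*b)^2 = 27*c^2 + 18*s*b*c + 9*b^2 := by
      linear_combination 9*c^2 * hs3
    have hP2 : (ω*(s+3))^2 ≤ (3*s*c+3*b)^2 := by
      rw [eL, eR]
      nlinarith [mul_le_mul_of_nonneg_right hω2 (show (0:ℝ) ≤ 12+6*s by linarith),
        mul_nonneg (sub_nonneg.2 hbc) (show (0:ℝ) ≤ (3+6*s)*b+27*c by positivity)]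
    have hP : ω*(s+3) ≤ 3*s*c+3*b := by
      have hA : (0:ℝ) ≤ ω*(s+3) := by positivity
      have hB : (0:ℝ) ≤ 3*s*c+3*b := by positivity
      calc ω*(s+3) = Real.sqrt ((ω*(s+3))^2) := (Real.sqrt_sq hA).symm
        _ ≤ Real.sqrt ((3*s*c+3*b)^2) := Real.sqrt_le_sqrt hP2
        _ = 3*s*c+3*b := Real.sqrt_sq hB
    linarith
  -- distances between matched vertices
  have d1 : dist (pt 0 h) (pt 0 ω) ≤ s * c - ω := by
    rw [pt_dist]
    have : ((0:ℝ)-0)^2 + (h-ω)^2 = (h-ω)^2 := by ring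
    rw [this, Real.sqrt_sq_eq_abs, abs_of_nonneg (by linarith)]
    linarith
  have d2 : dist (pt (-b) 0) (pt (-(ω/s)) 0) ≤ s * c - ω := by
    rw [pt_dist]
    have : (-b - -(ω/s))^2 + ((0:ℝ)-0)^2 = (ω*s/3 - b)^2 := by
      rw [hdiv]; ring
    rw [this, Real.sqrt_sq_eq_abs]
    exact abs_le.2 ⟨by linarith, key3⟩
  have d3 : dist (pt c 0) (pt (ω/s) 0) ≤ s * c - ω := by
    rw [pt_dist]
    have : (c - ω/s)^2 + ((0:ℝ)-0)^2 = (c - ω*s/3)^2 := by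
      rw [hdiv]; ring
    rw [this, Real.sqrt_sq_eq_abs]
    refine abs_le.2 ⟨?_, key1⟩
    have : ω * s / 3 - c ≤ ω * s / 3 - b := by linarith
    linarith
  -- memberships
  have mT1 : pt 0 h ∈ convexHull ℝ {pt 0 h, pt (-b) 0, pt c 0} :=
    subset_convexHull ℝ _ (by simp)
  have mT2 : pt (-b) 0 ∈ convexHull ℝ {pt 0 h, pt (-b) 0, pt c 0} :=
    subset_convexHull ℝ _ (by simp)
  have mT3 : pt c 0 ∈ convexHull ℝ {pt 0 h, pt (-b) 0, pt c 0} :=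
    subset_convexHull ℝ _ (by simp)
  have mE1 : pt 0 ω ∈ convexHull ℝ {pt 0 ω, pt (-(ω/s)) 0, pt (ω/s) 0} :=
    subset_convexHull ℝ _ (by simp)
  have mE2 : pt (-(ω/s)) 0 ∈ convexHull ℝ {pt 0 ω, pt (-(ω/s)) 0, pt (ω/s) 0} :=
    subset_convexHull ℝ _ (by simp)
  have mE3 : pt (ω/s) 0 ∈ convexHull ℝ {pt 0 ω, pt (-(ω/s)) 0, pt (ω/s) 0} :=
    subset_convexHull ℝ _ (by simp)
  apply Metric.hausdorffDist_le_of_infDist hr0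
  · apply infDist_convexHull_le (convex_convexHull ℝ _) ⟨_, mE1⟩ hr0
    intro v hv
    rcases hv with rfl | rfl | rfl
    · exact (Metric.infDist_le_dist_of_mem mE1).trans d1
    · exact (Metric.infDist_le_dist_of_mem mE2).trans d2
    · exact (Metric.infDist_le_dist_of_mem mE3).trans d3
  · apply infDist_convexHull_le (convex_convexHull ℝ _) ⟨_, mT1⟩ hr0
    intro v hv
    rcases hv with rfl | rfl | rfl
    · exact (Metric.infDist_le_dist_of_mem mT1).trans (by rw [dist_comm]; exact d1)
    · exact (Metric.infDist_le_dist_of_mem mT2).trans (by rw [dist_comm]; exact d2)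
    · exact (Metric.infDist_le_dist_of_mem mT3).trans (by rw [dist_comm]; exact d3)
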